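/- Let t_k ≤ T, let x_0 ∈ ℝ^n, and let x : [t_k, T] → ℝ^n be differentiable with ẋ(t) = f(x(t)) + g(x(t_k)) + h(x_0) for all t ∈ [t_k, T]. Let t ∈ [t_k, T], write ζ := t − t_k, and assume L_f − (L_f + L_g)(e^{L_f ζ} − 1) > 0. Then ‖x(t) − x(t_k)‖ ≤ [L_h (e^{L_f ζ} − 1) ‖x_0 − x̄‖ + (L_f + L_g)(e^{L_f ζ} − 1) ‖x(t) − x̄‖] / [L_f − (L_f + L_g)(e^{L_f ζ} − 1)]. -/

import Mathlib

/-- Bound on `‖x(t) − x(t_k)‖` for a solution of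
`ẋ(t) = f(x(t)) + g(x(t_k)) + h(x₀)` on `[t_k, T]`, in terms of
`‖x(t) − x̄‖` and `‖x₀ − x̄‖`, valid when
`L_f − (L_f + L_g)(e^{L_f ζ} − 1) > 0` with `ζ = t − t_k`. -/
theorem state_deviation_bound_inner_loop_implicit
    {n : ℕ} (f g h : EuclideanSpace ℝ (Fin n) → EuclideanSpace ℝ (Fin n))
    (Lf Lg Lh : ℝ) (hLf : 0 < Lf) (hLg : 0 < Lg) (hLh : 0 < Lh)
    (hf : ∀ a b, ‖f a - f b‖ ≤ Lf * ‖a - b‖)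
    (hg : ∀ a b, ‖g a - g b‖ ≤ Lg * ‖a - b‖)
    (hh : ∀ a b, ‖h a - h b‖ ≤ Lh * ‖a - b‖)
    (xb : EuclideanSpace ℝ (Fin n)) (heq : f xb + g xb + h xb = 0)
    (tk T : ℝ) (htkT : tk ≤ T)
    (x0 : EuclideanSpace ℝ (Fin n)) (x : ℝ → EuclideanSpace ℝ (Fin n))
    (hx : ∀ s ∈ Set.Icc tk T, HasDerivAt x (f (x s) + g (x tk) + h x0) s)
    (t : ℝ) (ht : t ∈ Set.Icc tk T)
    (hden : 0 < Lf - (Lf + Lg) * (Real.exp (Lf * (t - tk)) - 1)) :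
    ‖x t - x tk‖ ≤
      (Lh * (Real.exp (Lf * (t - tk)) - 1) * ‖x0 - xb‖
          + (Lf + Lg) * (Real.exp (Lf * (t - tk)) - 1) * ‖x t - xb‖)
        / (Lf - (Lf + Lg) * (Real.exp (Lf * (t - tk)) - 1)) := by
  obtain ⟨htk, htT⟩ := ht
  set c : EuclideanSpace ℝ (Fin n) := f (x tk) + g (x tk) + h x0 with hc
  set E := Real.exp (Lf * (t - tk)) - 1 with hE
  have hEnn : 0 ≤ E := by
    have : (1 : ℝ) ≤ Real.exp (Lf * (t - tk)) := by
      exact Real.one_le_exp (mul_nonneg hLf.le (by linarith))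
    linarith
  -- Grönwall step: ‖x t - x tk‖ ≤ ‖c‖ / Lf * E
  have hmem : ∀ s ∈ Set.Icc tk t, s ∈ Set.Icc tk T := fun s hs =>
    ⟨hs.1, hs.2.trans htT⟩
  have hcont : ContinuousOn (fun s => x s - x tk) (Set.Icc tk t) := fun s hs =>
    (((hx s (hmem s hs)).sub_const (x tk)).continuousAt).continuousWithinAt
  have hderiv : ∀ s ∈ Set.Ico tk t,
      HasDerivWithinAt (fun s => x s - x tk)
        ((f (x s) - f (x tk)) + c) (Set.Ici s) s := by
    intro s hs
    have := ((hx s (hmem s ⟨hs.1, hs.2.le⟩)).sub_const (x tk)).hasDerivWithinAt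
      (s := Set.Ici s)
    have key : (f (x s) - f (x tk)) + c = f (x s) + g (x tk) + h x0 := by
      rw [hc]; abel
    rw [key]; exact this
  have hbound : ∀ s ∈ Set.Ico tk t,
      ‖(f (x s) - f (x tk)) + c‖ ≤ Lf * ‖x s - x tk‖ + ‖c‖ := by
    intro s _
    calc ‖(f (x s) - f (x tk)) + c‖ ≤ ‖f (x s) - f (x tk)‖ + ‖c‖ := norm_add_le _ _
      _ ≤ Lf * ‖x s - x tk‖ + ‖c‖ := by linarith [hf (x s) (x tk)]
  have hgron := norm_le_gronwallBound_of_norm_deriv_right_le (δ := 0) hcont hderiv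
    (by simp) hbound t ⟨htk, le_refl t⟩
  rw [gronwallBound_of_K_ne_0 hLf.ne'] at hgron
  simp only [zero_mul, zero_add] at hgron
  have hy : ‖x t - x tk‖ ≤ ‖c‖ / Lf * E := hgron
  -- bound ‖c‖
  have hcb : ‖c‖ ≤ (Lf + Lg) * ‖x tk - xb‖ + Lh * ‖x0 - xb‖ := by
    have : c = (f (x tk) - f xb) + (g (x tk) - g xb) + (h x0 - h xb) := by
      rw [hc, ← sub_zero (f (x tk) + g (x tk) + h x0), ← heq]; abel
    rw [this]
    calc ‖(f (x tk) - f xb) + (g (x tk) - g xb) + (h x0 - h xb)‖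
        ≤ ‖f (x tk) - f xb‖ + ‖g (x tk) - g xb‖ + ‖h x0 - h xb‖ :=
          norm_add₃_le
      _ ≤ (Lf + Lg) * ‖x tk - xb‖ + Lh * ‖x0 - xb‖ := by
          have := hf (x tk) xb; have := hg (x tk) xb; have := hh x0 xb
          nlinarith
  have htri : ‖x tk - xb‖ ≤ ‖x t - x tk‖ + ‖x t - xb‖ := by
    calc ‖x tk - xb‖ = ‖(x t - xb) - (x t - x tk)‖ := by congr 1; abel
      _ ≤ ‖x t - xb‖ + ‖x t - x tk‖ := norm_sub_le _ _
      _ = ‖x t - x tk‖ + ‖x t - xb‖ := by ring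
  rw [le_div_iff₀ hden]
  have hcnn : (0:ℝ) ≤ ‖c‖ := norm_nonneg _
  have h1 : ‖x t - x tk‖ * Lf ≤ ‖c‖ * E := by
    have := mul_le_mul_of_nonneg_right hy hLf.le
    rw [div_mul_eq_mul_div, mul_comm, ← div_mul_eq_mul_div] at this
    calc ‖x t - x tk‖ * Lf = Lf * ‖x t - x tk‖ := by ring
      _ ≤ Lf * (‖c‖ / Lf * E) := by
          exact mul_le_mul_of_nonneg_left hy hLf.le
      _ = ‖c‖ * E := by field_simp
  nlinarith [mul_le_mul_of_nonneg_right hcb hEnn,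
    mul_le_mul_of_nonneg_right htri (mul_nonneg (by linarith : (0:ℝ) ≤ Lf + Lg) hEnn),
    norm_nonneg (x t - x tk), norm_nonneg (x t - xb), norm_nonneg (x0 - xb)]
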